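/- arXiv:2601.06476 — 2 statements merged into one kernel-verified Lean document; each statement's English description precedes it below -/
import Mathlib

section
/- Let l₁, l₂, l₃, m₁, m₂, m₃ be linear forms in ℂ[X₀,X₁,X₂,X₃] such that l₁, l₂, l₃, m₁ are linearly independent, and set f = l₁l₂l₃ − m₁m₂m₃. Then there exists a ℂ-algebra automorphism φ of ℂ[X₀,X₁,X₂,X₃] (given by an invertible linear change of variables) and linear forms h₁, h₂ such that φ(f) = X₀X₁X₂ − X₃·h₁·h₂; consequently the leading monomial of φ(f) with respect to the degree reverse lexicographic order with X₀ > X₁ > X₂ > X₃ is X₀X₁X₂. -/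
open MvPolynomial

/-- The degree reverse lexicographic order on exponent vectors in `n` variables,
where `ord j` is the variable in position `j` (position `0` = greatest variable).
`u` is smaller than `v` iff `u` has smaller total degree, or the degrees agree and the
last nonzero entry of the vector of differences `u - v` (entries listed according to the
variable order) is positive. -/
def DegRevLexLT {n : ℕ} (ord : Fin n → Fin n) (u v : Fin n →₀ ℕ) : Prop :=
  (∑ i, u i) < (∑ i, v i) ∨
    ((∑ i, u i) = (∑ i, v i) ∧
      ∃ j : Fin n, v (ord j) < u (ord j) ∧ ∀ k : Fin n, j < k → u (ord k) = v (ord k))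

/-- `d` is the leading monomial of `f` with respect to the strict order `lt` on
exponent vectors: `d` occurs in `f` and dominates every other exponent in the support. -/
def IsLeadingMonomial {n : ℕ} {R : Type*} [CommSemiring R]
    (lt : (Fin n →₀ ℕ) → (Fin n →₀ ℕ) → Prop) (f : MvPolynomial (Fin n) R)
    (d : Fin n →₀ ℕ) : Prop :=
  d ∈ f.support ∧ ∀ e ∈ f.support, e ≠ d → lt e d


lemma degree_single' (i : Fin 4) : Finsupp.degree (Finsupp.single i 1 : Fin 4 →₀ ℕ) = 1 := by
  simp [Finsupp.degree_apply, Finsupp.support_single_ne_zero i one_ne_zero]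

lemma deg_one_eq_single {d : Fin 4 →₀ ℕ} (h : Finsupp.degree d = 1) :
    ∃ j, d = Finsupp.single j 1 := by
  obtain ⟨j, hj⟩ : ∃ j, d j ≠ 0 := by
    by_contra hc; push_neg at hc
    have : d = 0 := Finsupp.ext fun i => hc i
    rw [this, map_zero] at h; exact one_ne_zero h.symm
  have hj' : j ∈ d.support := Finsupp.mem_support_iff.mpr hj
  have hle : d j ≤ 1 := h ▸ Finsupp.le_degree j d
  have hdj : d j = 1 := le_antisymm hle (Nat.one_le_iff_ne_zero.mpr hj)
  refine ⟨j, Finsupp.ext fun i => ?_⟩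
  rcases eq_or_ne i j with rfl | hij
  · simp [hdj]
  · rw [Finsupp.single_eq_of_ne' (Ne.symm hij)]
    by_cases hi : i ∈ d.support
    · have hsum : d j + ∑ k ∈ d.support.erase j, d k = ∑ k ∈ d.support, d k :=
        Finset.add_sum_erase _ _ hj'
      have : ∑ k ∈ d.support.erase j, d k = 0 := by
        have hh : Finsupp.degree d = ∑ k ∈ d.support, d k := rfl
        omega
      exact Finset.sum_eq_zero_iff.mp this i (Finset.mem_erase.mpr ⟨hij, hi⟩)
    · simpa using hi

lemma hom1_expand (p : MvPolynomial (Fin 4) ℂ) (hp : p.IsHomogeneous 1) :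
    p = ∑ i : Fin 4, C (coeff (Finsupp.single i 1) p) * X i := by
  ext d
  rw [coeff_sum]
  simp only [coeff_C_mul, coeff_X', mul_ite, mul_one, mul_zero]
  by_cases hd : Finsupp.degree d = 1
  · obtain ⟨j, rfl⟩ := deg_one_eq_single hd
    rw [Finset.sum_eq_single j]
    · simp
    · intro i _ hij
      rw [if_neg]
      exact fun hcon => hij ((Finsupp.single_left_inj one_ne_zero).mp hcon)
    · simp
  · rw [hp.coeff_eq_zero hd]
    refine (Finset.sum_eq_zero fun i _ => ?_).symm
    rw [if_neg]
    intro hcon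
    exact hd (by rw [← hcon, degree_single'])

lemma lincomb_aeval (M : Matrix (Fin 4) (Fin 4) ℂ) (v : Fin 4 → ℂ) :
    aeval (fun i => ∑ k : Fin 4, C (M i k) * X k) (∑ j : Fin 4, C (v j) * X j)
      = ∑ k : Fin 4, C (Matrix.vecMul v M k) * X k := by
  rw [map_sum]
  simp only [map_mul, aeval_C, aeval_X, algebraMap_eq]
  simp_rw [Finset.mul_sum, ← mul_assoc, ← C_mul]
  rw [Finset.sum_comm]
  refine Finset.sum_congr rfl fun k _ => ?_
  rw [Matrix.vecMul, dotProduct]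
  rw [map_sum, Finset.sum_mul]

lemma lincomb_one (j : Fin 4) :
    (∑ k : Fin 4, C ((1 : Matrix (Fin 4) (Fin 4) ℂ) j k) * X k)
      = (X j : MvPolynomial (Fin 4) ℂ) := by
  rw [Finset.sum_eq_single j] <;> simp +contextual [Matrix.one_apply, Ne.symm]

lemma leading_aux (h₁ h₂ : MvPolynomial (Fin 4) ℂ)
    (hh₁ : h₁.IsHomogeneous 1) (hh₂ : h₂.IsHomogeneous 1) :
    IsLeadingMonomial (DegRevLexLT (id : Fin 4 → Fin 4)) (X 0 * X 1 * X 2 - X 3 * h₁ * h₂)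
      (Finsupp.single 0 1 + Finsupp.single 1 1 + Finsupp.single 2 1) := by
  classical
  set e₀ : Fin 4 →₀ ℕ := Finsupp.single 0 1 + Finsupp.single 1 1 + Finsupp.single 2 1 with he₀
  set F : MvPolynomial (Fin 4) ℂ := X 0 * X 1 * X 2 - X 3 * h₁ * h₂ with hF
  have hmono : (X 0 * X 1 * X 2 : MvPolynomial (Fin 4) ℂ) = monomial e₀ 1 := by
    rw [he₀]
    rw [X, X, X, monomial_mul, monomial_mul]
    norm_num
  have he₀3 : e₀ 3 = 0 := by
    rw [he₀]; simp [Finsupp.single_apply]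
  have hx3 : ∀ e : Fin 4 →₀ ℕ, e 3 = 0 → coeff e (X 3 * h₁ * h₂) = 0 := by
    intro e he
    rw [mul_assoc, coeff_X_mul', if_neg]
    simpa using he
  have hcoe : ∀ e, coeff e F = (if e₀ = e then 1 else 0) - coeff e (X 3 * h₁ * h₂) := by
    intro e
    rw [hF, coeff_sub, hmono, coeff_monomial]
  have hF3 : F.IsHomogeneous 3 := by
    have : F.IsHomogeneous (1 + 1 + 1) := by
      refine IsHomogeneous.sub ?_ ?_
      · exact ((isHomogeneous_X _ _).mul (isHomogeneous_X _ _)).mul (isHomogeneous_X _ _)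
      · exact ((isHomogeneous_X _ _).mul hh₁).mul hh₂
    norm_num at this
    exact this
  have hdeg : ∀ e : Fin 4 →₀ ℕ, coeff e F ≠ 0 → ∑ i, e i = 3 := by
    intro e he
    have h1 : Finsupp.degree e = 3 := by
      rw [Finsupp.degree_eq_weight_one]; exact hF3 he
    rw [← h1, Finsupp.degree_apply]
    exact (Finset.sum_subset (Finset.subset_univ _)
      (fun i _ hi => Finsupp.notMem_support_iff.mp hi)).symm
  have he₀mem : coeff e₀ F ≠ 0 := by
    rw [hcoe, if_pos rfl, hx3 e₀ he₀3]
    norm_num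
  constructor
  · exact mem_support_iff.mpr he₀mem
  · intro e he hne
    rw [mem_support_iff] at he
    right
    refine ⟨by rw [hdeg e he, hdeg e₀ he₀mem], 3, ?_, ?_⟩
    · show e₀ (id 3) < e (id 3)
      simp only [id]
      rw [he₀3]
      have : coeff e (X 3 * h₁ * h₂) ≠ 0 := by
        rw [hcoe, if_neg (fun h => hne h.symm)] at he
        simpa using he
      rcases Nat.eq_zero_or_pos (e 3) with h | h
      · exact absurd (hx3 e h) this
      · exact h
    · intro k hk
      have := k.isLt
      rw [Fin.lt_def] at hk
      norm_num at hk
      omega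

/-- if `l₁, l₂, l₃, m₁, m₂, m₃` are linear forms in `ℂ[X₀,X₁,X₂,X₃]` with
`l₁, l₂, l₃, m₁` linearly independent and `f = l₁l₂l₃ − m₁m₂m₃`, then there exist a
linear change of variables `φ` and linear forms `h₁, h₂` with
`φ f = X₀X₁X₂ − X₃h₁h₂`; consequently the leading monomial of `φ f` with respect to
degrevlex with `X₀ > X₁ > X₂ > X₃` is `X₀X₁X₂`. -/
theorem statement2 (l₁ l₂ l₃ m₁ m₂ m₃ : MvPolynomial (Fin 4) ℂ)
    (hl₁ : l₁.IsHomogeneous 1) (hl₂ : l₂.IsHomogeneous 1) (hl₃ : l₃.IsHomogeneous 1)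
    (hm₁ : m₁.IsHomogeneous 1) (hm₂ : m₂.IsHomogeneous 1) (hm₃ : m₃.IsHomogeneous 1)
    (hind : LinearIndependent ℂ ![l₁, l₂, l₃, m₁])
    (f : MvPolynomial (Fin 4) ℂ) (hf : f = l₁ * l₂ * l₃ - m₁ * m₂ * m₃) :
    ∃ φ : MvPolynomial (Fin 4) ℂ ≃ₐ[ℂ] MvPolynomial (Fin 4) ℂ,
      (∀ i, (φ (X i)).IsHomogeneous 1) ∧
      ∃ h₁ h₂ : MvPolynomial (Fin 4) ℂ, h₁.IsHomogeneous 1 ∧ h₂.IsHomogeneous 1 ∧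
        φ f = X 0 * X 1 * X 2 - X 3 * h₁ * h₂ ∧
        IsLeadingMonomial (DegRevLexLT (id : Fin 4 → Fin 4)) (φ f)
          (Finsupp.single 0 1 + Finsupp.single 1 1 + Finsupp.single 2 1) := by

  classical
  set L : Fin 4 → MvPolynomial (Fin 4) ℂ := ![l₁, l₂, l₃, m₁] with hLdef
  have hL : ∀ i, (L i).IsHomogeneous 1 := by
    intro i; fin_cases i <;> simpa [hLdef]
  set B : Matrix (Fin 4) (Fin 4) ℂ :=
    Matrix.of fun i j => coeff (Finsupp.single j 1) (L i) with hBdef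
  have hLB : ∀ i, L i = ∑ j : Fin 4, C (B i j) * X j := fun i => hom1_expand _ (hL i)
  have hBunit : IsUnit B := by
    rw [← Matrix.linearIndependent_rows_iff_isUnit]
    refine LinearIndependent.of_comp
      (Fintype.linearCombination ℂ (fun j => (X j : MvPolynomial (Fin 4) ℂ))) ?_
    have : (Fintype.linearCombination ℂ (fun j => (X j : MvPolynomial (Fin 4) ℂ))) ∘
        (fun i => B i) = L := by
      funext i
      rw [Function.comp_apply, Fintype.linearCombination_apply, hLB i]
      exact Finset.sum_congr rfl fun k _ => (smul_eq_C_mul _ _)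
    rw [show B.row = fun i => B i from rfl, this]; exact hind
  have hdet : IsUnit B.det := (Matrix.isUnit_iff_isUnit_det B).mp hBunit
  have hBB : B * B⁻¹ = 1 := Matrix.mul_nonsing_inv B hdet
  have hBB' : B⁻¹ * B = 1 := Matrix.nonsing_inv_mul B hdet
  set g : Fin 4 → MvPolynomial (Fin 4) ℂ :=
    fun i => ∑ k : Fin 4, C (B⁻¹ i k) * X k with hgdef
  have key : ∀ (M N : Matrix (Fin 4) (Fin 4) ℂ), M * N = 1 →
      ((aeval (fun i => ∑ k : Fin 4, C (N i k) * X k)).comp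
        (aeval (fun i => ∑ k : Fin 4, C (M i k) * X k)) :
        MvPolynomial (Fin 4) ℂ →ₐ[ℂ] MvPolynomial (Fin 4) ℂ) = AlgHom.id ℂ _ := by
    intro M N hMN
    refine MvPolynomial.algHom_ext fun j => ?_
    rw [AlgHom.comp_apply, aeval_X, lincomb_aeval, AlgHom.id_apply, ← lincomb_one j]
    refine Finset.sum_congr rfl fun k _ => ?_
    congr 1
    rw [← hMN]
    rw [Matrix.mul_apply, Matrix.vecMul, dotProduct]
  set φ : MvPolynomial (Fin 4) ℂ ≃ₐ[ℂ] MvPolynomial (Fin 4) ℂ :=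
    AlgEquiv.ofAlgHom (aeval g) (aeval (fun i => ∑ k : Fin 4, C (B i k) * X k))
      (key B B⁻¹ hBB) (key B⁻¹ B hBB') with hφdef
  have hφapp : ∀ p, φ p = aeval g p := fun p => rfl
  have hφL : ∀ i, φ (L i) = X i := by
    intro i
    rw [hφapp, hLB i, hgdef, lincomb_aeval, ← lincomb_one i]
    refine Finset.sum_congr rfl fun k _ => ?_
    congr 1
    rw [← hBB, Matrix.mul_apply, Matrix.vecMul, dotProduct]
  have hgh : ∀ i, ((g i : MvPolynomial (Fin 4) ℂ)).IsHomogeneous 1 := by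
    intro i
    rw [← mem_homogeneousSubmodule]
    refine Submodule.sum_mem _ fun k _ => ?_
    rw [← smul_eq_C_mul]
    exact Submodule.smul_mem _ _ ((mem_homogeneousSubmodule _ _).mpr (isHomogeneous_X _ _))
  have hφhom : ∀ i, (φ (X i)).IsHomogeneous 1 := by
    intro i; rw [hφapp, aeval_X]; exact hgh i
  have hh2 : (φ m₂).IsHomogeneous 1 := by rw [hφapp]; exact hm₂.aeval g hgh
  have hh3 : (φ m₃).IsHomogeneous 1 := by rw [hφapp]; exact hm₃.aeval g hgh
  have heq : φ f = X 0 * X 1 * X 2 - X 3 * φ m₂ * φ m₃ := by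
    have h0 : φ l₁ = X 0 := hφL 0
    have h1 : φ l₂ = X 1 := hφL 1
    have h2 : φ l₃ = X 2 := hφL 2
    have h3 : φ m₁ = X 3 := hφL 3
    rw [hf, map_sub, map_mul, map_mul, map_mul, map_mul, h0, h1, h2, h3]
  refine ⟨φ, hφhom, φ m₂, φ m₃, hh2, hh3, heq, ?_⟩
  rw [heq]
  exact leading_aux (φ m₂) (φ m₃) hh2 hh3
end

section
/- Let R = 𝔽₂[[x,y]]/(x,y)² and denote by x̄, ȳ the images of x and y in R. There exists an additive map φ : R → R such that φ(r² s) = r φ(s) for all r, s ∈ R and φ(x̄) = ȳ. In particular, since ȳ does not belong to the ideal (x̄) of R, the ideal (x̄) is not uniformly compatible. -/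
/-- An ideal `J` of a ring `R` of prime characteristic `p` is uniformly compatible if
`φ(J) ⊆ J` for every `e ≥ 1` and every additive map `φ : R → R` satisfying
`φ (r^(p^e) * s) = r * φ s` (the `p^(−e)`-linear maps on `R`). -/
def UniformlyCompatible (p : ℕ) {R : Type*} [CommRing R] (J : Ideal R) : Prop :=
  ∀ e : ℕ, 1 ≤ e → ∀ φ : R →+ R,
    (∀ r s : R, φ (r ^ p ^ e * s) = r * φ s) → ∀ j ∈ J, φ j ∈ J

namespace St15

open MvPowerSeries Finsupp

noncomputable section

abbrev S : Type := MvPowerSeries (Fin 2) (ZMod 2)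

def I : Ideal S := Ideal.span {(X 0 : S), X 1}

abbrev R : Type := S ⧸ (I ^ 2)

lemma fin2_finsupp_eq_zero {u : Fin 2 →₀ ℕ} (h0 : u 0 = 0) (h1 : u 1 = 0) : u = 0 := by
  ext i
  fin_cases i <;> simpa

lemma mem_I_const {f : S} (hf : f ∈ I) : constantCoeff f = 0 := by
  have : I ≤ RingHom.ker (constantCoeff) := by
    rw [I, Ideal.span_le]
    rintro x (rfl | rfl) <;> simp [RingHom.mem_ker]
  simpa [RingHom.mem_ker] using this hf

lemma coeff_low {f : S} (hf : f ∈ I ^ 2) (d : Fin 2 →₀ ℕ) (hd : d 0 + d 1 ≤ 1) :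
    coeff d f = 0 := by
  rw [pow_two] at hf
  refine Submodule.mul_induction_on hf ?_ ?_
  · intro m hm n hn
    classical
    rw [coeff_mul]
    refine Finset.sum_eq_zero ?_
    rintro ⟨u, v⟩ hp
    rw [Finset.HasAntidiagonal.mem_antidiagonal] at hp
    have h0 : u 0 + v 0 = d 0 := by rw [← hp]; simp
    have h1 : u 1 + v 1 = d 1 := by rw [← hp]; simp
    have : (u 0 + u 1) + (v 0 + v 1) ≤ 1 := by omega
    rcases Nat.le_one_iff_eq_zero_or_eq_one.mp this with h | h
    · have hu : u = 0 := fin2_finsupp_eq_zero (by omega) (by omega)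
      have hv : v = 0 := fin2_finsupp_eq_zero (by omega) (by omega)
      subst hu
      simp [coeff_zero_eq_constantCoeff, mem_I_const hm]
    · rcases Nat.add_eq_one_iff.mp h with ⟨h', _⟩ | ⟨_, h'⟩
      · have hu : u = 0 := fin2_finsupp_eq_zero (by omega) (by omega)
        subst hu
        simp [coeff_zero_eq_constantCoeff, mem_I_const hm]
      · have hv : v = 0 := fin2_finsupp_eq_zero (by omega) (by omega)
        subst hv
        simp [coeff_zero_eq_constantCoeff, mem_I_const hn]
  · intro x y hx hy
    simp [map_add, hx, hy]

lemma const_mem_I {f : S} (hf : constantCoeff f = 0) : f ∈ I := by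
  classical
  set g0 : S := fun d => if d 1 = 0 then coeff (d + single 0 1) f else 0 with hg0
  set g1 : S := fun d => coeff (d + single 1 1) f with hg1
  have hX : ∀ s : Fin 2, (X s : S) = monomial (single s 1) 1 := fun s => rfl
  have key : f = X 0 * g0 + X 1 * g1 := by
    ext d
    rw [map_add, hX 0, hX 1, coeff_monomial_mul, coeff_monomial_mul]
    rcases Nat.eq_zero_or_pos (d 1) with hd1 | hd1
    · rcases Nat.eq_zero_or_pos (d 0) with hd0 | hd0
      · have hd : d = 0 := fin2_finsupp_eq_zero hd0 hd1
        subst hd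
        rw [if_neg, if_neg]
        · simpa [coeff_zero_eq_constantCoeff] using hf
        · rw [single_le_iff]; omega
        · rw [single_le_iff]; omega
      · have hle : single (0 : Fin 2) 1 ≤ d := single_le_iff.mpr hd0
        rw [if_pos hle, if_neg (by rw [single_le_iff]; omega)]
        have : g0 (d - single 0 1) = coeff d f := by
          rw [hg0]
          simp only
          rw [if_pos (by rw [tsub_apply]; simp [hd1]), tsub_add_cancel_of_le hle]
        have hc : coeff (d - single 0 1) g0 = g0 (d - single 0 1) := rfl
        rw [hc, this, one_mul, add_zero]
    · have hle : single (1 : Fin 2) 1 ≤ d := single_le_iff.mpr hd1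
      rw [if_pos hle]
      have hc : coeff (d - single 1 1) g1 = g1 (d - single 1 1) := rfl
      have h2 : g1 (d - single 1 1) = coeff d f := by
        rw [hg1]; simp only; rw [tsub_add_cancel_of_le hle]
      rw [hc, h2, one_mul]
      by_cases hle0 : single (0 : Fin 2) 1 ≤ d
      · rw [if_pos hle0]
        have hc0 : coeff (d - single 0 1) g0 = g0 (d - single 0 1) := rfl
        rw [hc0, hg0]
        simp only
        rw [if_neg (by rw [tsub_apply]; simp; omega)]
        ring
      · rw [if_neg hle0]; ring
  rw [key]
  exact Ideal.add_mem _
    (Ideal.mul_mem_right _ _ (Ideal.subset_span (by simp)))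
    (Ideal.mul_mem_right _ _ (Ideal.subset_span (by simp)))

def e0 : Fin 2 →₀ ℕ := single 0 1
def e1 : Fin 2 →₀ ℕ := single 1 1

/-- `α f = (coeff e0 f) • X 1`, as a `ZMod 2`-linear map. -/
def α : S →ₗ[ZMod 2] S :=
  (LinearMap.toSpanSingleton (ZMod 2) S (X 1)).comp (coeff e0)

lemma α_apply (f : S) : α f = C (coeff e0 f) * X 1 := by
  simp [α, LinearMap.toSpanSingleton_apply, smul_eq_C_mul]

def q : Submodule (ZMod 2) S := (I ^ 2).restrictScalars (ZMod 2)

def E : (S ⧸ q) ≃ₗ[ZMod 2] R := Submodule.Quotient.restrictScalarsEquiv (ZMod 2) (I ^ 2)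

def ψ : S →ₗ[ZMod 2] R := (E.toLinearMap.comp q.mkQ).comp α

lemma q_le_ker : q ≤ LinearMap.ker ψ := by
  intro f hf
  have hf' : f ∈ I ^ 2 := hf
  have : coeff e0 f = 0 := coeff_low hf' e0 (by simp [e0])
  simp [ψ, α_apply, this, LinearMap.mem_ker]

def φ : R →+ R := ((q.liftQ ψ q_le_ker).comp (E.symm.toLinearMap)).toAddMonoidHom

lemma φ_mk (f : S) :
    φ (Ideal.Quotient.mk (I ^ 2) f) =
      Ideal.Quotient.mk (I ^ 2) (C (coeff e0 f) * X 1) := by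
  have h : φ (Ideal.Quotient.mk (I ^ 2) f) = Ideal.Quotient.mk (I ^ 2) (α f) := rfl
  rw [h, α_apply]


lemma two_eq_zero : (2 : S) = 0 := by
  have h : ((2 : ℕ) : S) = C ((2 : ℕ) : ZMod 2) := (map_natCast _ 2).symm
  have h2 : ((2 : ℕ) : ZMod 2) = 0 := by decide
  rw [h2, map_zero] at h
  exact_mod_cast h

lemma sub_const_mem {f : S} : f - C (constantCoeff f) ∈ I :=
  const_mem_I (by simp)

lemma frob (f : S) :
    f ^ 2 = (f - C (constantCoeff f)) ^ 2
      + C (constantCoeff f) := by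
  set c := C (constantCoeff f) with hc
  have ha : c ^ 2 = c := by
    rw [hc, ← map_pow]
    congr 1
    generalize constantCoeff f = a
    revert a; decide
  linear_combination (c * f - c) * two_eq_zero - ha

lemma coeff_e0_sq_mul (f g : S) :
    coeff e0 (f ^ 2 * g) =
      constantCoeff f * coeff e0 g := by
  set c := C (constantCoeff f) with hc
  have key : f ^ 2 * g = (f - c) ^ 2 * g + c * g := by rw [frob f]; ring
  have hmem : (f - c) ^ 2 * g ∈ I ^ 2 :=
    Ideal.mul_mem_right _ _ (Ideal.pow_mem_pow sub_const_mem 2)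
  rw [key, map_add, coeff_low hmem e0 (by simp [e0]), zero_add, hc, ← smul_eq_C_mul,
    coeff_smul]

lemma hmul (r s : R) : φ (r ^ 2 * s) = r * φ s := by
  obtain ⟨f, rfl⟩ := Ideal.Quotient.mk_surjective r
  obtain ⟨g, rfl⟩ := Ideal.Quotient.mk_surjective s
  rw [← map_pow, ← map_mul, φ_mk, φ_mk, coeff_e0_sq_mul, ← map_mul, Ideal.Quotient.eq]
  set a := constantCoeff f
  set b := coeff e0 g
  have hrw : C (a * b) * X 1 - f * (C b * X 1)
      = -(C b * ((f - C a) * X 1)) := by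
    rw [map_mul]; ring
  rw [hrw]
  refine neg_mem (Ideal.mul_mem_left _ _ ?_)
  rw [pow_two]
  exact Ideal.mul_mem_mul sub_const_mem (Ideal.subset_span (by simp))

lemma hx : φ (Ideal.Quotient.mk (I ^ 2) (X 0)) = Ideal.Quotient.mk (I ^ 2) (X 1) := by
  rw [φ_mk]
  have : coeff e0 (X (0 : Fin 2) : S) = 1 := by
    classical
    rw [coeff_X]; simp [e0]
  rw [this, map_one, one_mul]

lemma hy : (Ideal.Quotient.mk (I ^ 2) (X 1) : R)
    ∉ Ideal.span {(Ideal.Quotient.mk (I ^ 2) (X 0) : R)} := by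
  intro h
  rw [Ideal.mem_span_singleton'] at h
  obtain ⟨z, hz⟩ := h
  obtain ⟨f, rfl⟩ := Ideal.Quotient.mk_surjective z
  rw [← map_mul, Ideal.Quotient.eq] at hz
  have := coeff_low hz e1 (by simp [e1])
  rw [map_sub] at this
  have h1 : coeff e1 (f * X 0) = 0 := by
    rw [show (X 0 : S) = monomial (single 0 1) 1 from rfl, coeff_mul_monomial,
      if_neg]
    rw [single_le_iff]
    simp [e1]
  have h2 : coeff e1 (X (1 : Fin 2) : S) = 1 := by
    classical
    rw [coeff_X]; simp [e1]
  rw [h1, h2] at this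
  simp at this

lemma hnc : ¬ UniformlyCompatible 2
    (Ideal.span {(Ideal.Quotient.mk (I ^ 2) (X 0) : R)}) := by
  intro H
  have := H 1 le_rfl φ (by intro r s; rw [pow_one]; exact hmul r s)
    (Ideal.Quotient.mk (I ^ 2) (X 0)) (Ideal.mem_span_singleton_self _)
  rw [hx] at this
  exact hy this

end
end St15

/-- let `R = 𝔽₂[[x,y]]/(x,y)²` and let `x̄, ȳ` be the images of `x, y`.
There is an additive map `φ : R → R` with `φ (r² s) = r φ s` and `φ x̄ = ȳ`; since
`ȳ ∉ (x̄)`, the ideal `(x̄)` is not uniformly compatible. -/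
theorem statement15 :
    letI S := MvPowerSeries (Fin 2) (ZMod 2)
    letI R := S ⧸ (Ideal.span {(MvPowerSeries.X 0 : S), MvPowerSeries.X 1}) ^ 2
    letI xbar : R := Ideal.Quotient.mk _ (MvPowerSeries.X 0)
    letI ybar : R := Ideal.Quotient.mk _ (MvPowerSeries.X 1)
    (∃ φ : R →+ R, (∀ r s : R, φ (r ^ 2 * s) = r * φ s) ∧ φ xbar = ybar) ∧
      ybar ∉ Ideal.span {xbar} ∧
      ¬ UniformlyCompatible 2 (Ideal.span {xbar}) := by
  exact ⟨⟨St15.φ, St15.hmul, St15.hx⟩, St15.hy, St15.hnc⟩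
end
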